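/- Let P = (p_1, …, p_n) be a finite sequence of pairwise distinct points in ℝ^d and let 1 ≤ i < j ≤ n. If there exists c ∈ ℝ^d with dist(c, p_i) = dist(c, p_j) and dist(c, p_k) > dist(c, p_i) for all k ≤ j with k ≠ i and k ≠ j (a strict witness of Voronoi adjacency of p_i and p_j in P_{1:j}), then Cell(p_i; P_{1:j}) is a proper subset of Cell(p_i; P_{1:j−1}); i.e., the insertion of p_j prunes the Voronoi cell of p_i. -/

import Mathlib

open Set

noncomputable section

/-- Euclidean space `ℝ^d`. -/
abbrev E (d : ℕ) := EuclideanSpace ℝ (Fin d)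

/-- The Voronoi cell of `p` with respect to the site set `S`:
all points at least as close to `p` as to every site of `S`. -/
def cell {d : ℕ} (p : E d) (S : Set (E d)) : Set (E d) :=
  {x | ∀ s ∈ S, dist x p ≤ dist x s}

/-- The prefix set `P_{1:m}` consisting of the first `m` points of the
sequence `p` (0-based indices `< m`). -/
def pref {d n : ℕ} (p : Fin n → E d) (m : ℕ) : Set (E d) :=
  p '' {i : Fin n | (i : ℕ) < m}

/-- `p j` is a successor of `p i` (`p j ∈ L i`): `i < j` and the insertion of
`p j` prunes the Voronoi cell of `p i`, i.e. `Cell(p_i; P_{1:j})` is a proper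
subset of `Cell(p_i; P_{1:j-1})` (in 1-based notation). -/
def isSucc {d n : ℕ} (p : Fin n → E d) (i j : Fin n) : Prop :=
  i < j ∧ cell (p i) (pref p ((j : ℕ) + 1)) ⊂ cell (p i) (pref p (j : ℕ))

/-- `p i` is the nearest neighbor `Φ_{1:m}(q)` of `q` in the prefix `P_{1:m}`. -/
def isNearest {d n : ℕ} (p : Fin n → E d) (q : E d) (m : ℕ) (i : Fin n) : Prop :=
  (i : ℕ) < m ∧ ∀ j : Fin n, (j : ℕ) < m → dist q (p i) ≤ dist q (p j)

/-- a strict witness of Voronoi adjacency of `p_i` and `p_j`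
in `P_{1:j}` implies that the insertion of `p_j` prunes the Voronoi cell of
`p_i`. -/
theorem stmt11
    {d n : ℕ} (hd : 1 ≤ d)
    (p : Fin n → E d) (hp : Function.Injective p)
    (i j : Fin n) (hij : i < j) (c : E d)
    (heq : dist c (p i) = dist c (p j))
    (hstrict : ∀ k : Fin n, k ≤ j → k ≠ i → k ≠ j →
      dist c (p i) < dist c (p k)) :
    cell (p i) (pref p ((j : ℕ) + 1)) ⊂ cell (p i) (pref p (j : ℕ)) := by

  classical
  -- the prefix sets are nested
  have hsub : cell (p i) (pref p ((j : ℕ) + 1)) ⊆ cell (p i) (pref p (j : ℕ)) := by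
    intro x hx s hs
    refine hx s ?_
    obtain ⟨k, hk, rfl⟩ := hs
    exact ⟨k, Nat.lt_succ_of_lt hk, rfl⟩
  -- setup
  have hne : p j ≠ p i := hp.ne (ne_of_gt hij)
  set v : E d := p j - p i with hv
  have hvne : v ≠ 0 := sub_ne_zero.mpr hne
  have hvpos : (0:ℝ) < ‖v‖ := norm_pos_iff.mpr hvne
  set S : Finset (Fin n) := Finset.univ.filter (fun k => (k:ℕ) < (j:ℕ) ∧ k ≠ i) with hS
  set f : Fin n → ℝ := fun k => dist c (p k) - dist c (p i) with hf
  set T : Finset ℝ := insert 1 (S.image f) with hT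
  have hTne : T.Nonempty := ⟨1, Finset.mem_insert_self _ _⟩
  set ε : ℝ := T.min' hTne with hε
  have hεk : ∀ k ∈ S, ε ≤ f k := fun k hk =>
    Finset.min'_le _ _ (Finset.mem_insert_of_mem (Finset.mem_image_of_mem f hk))
  have hεpos : 0 < ε := by
    have hm := T.min'_mem hTne
    rcases Finset.mem_insert.mp hm with h | h
    · rw [hε, h]; exact one_pos
    · obtain ⟨a, ha, hfa⟩ := Finset.mem_image.mp h
      rw [hε, ← hfa]
      obtain ⟨-, haj, hai⟩ := Finset.mem_filter.mp ha
        |>.imp id (fun h => h)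
      have haj' : a ≠ j := by rintro rfl; exact lt_irrefl _ haj
      have := hstrict a (le_of_lt (Fin.lt_iff_val_lt_val.mpr haj)) hai haj'
      simp only [f]; linarith
  set t : ℝ := ε / (2 * ‖v‖) with ht
  have htpos : 0 < t := div_pos hεpos (by positivity)
  set x : E d := c + t • v with hx
  have hxc : dist x c = t * ‖v‖ := by
    rw [hx, dist_eq_norm, add_sub_cancel_left, norm_smul, Real.norm_eq_abs,
      abs_of_pos htpos]
  have h2t : 2 * (t * ‖v‖) = ε := by
    field_simp [ht]
    rw [ht]; field_simp
  -- key strict inequality: x is strictly closer to p j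
  have hkey : dist x (p j) < dist x (p i) := by
    have e1 : x - p j = (c - p j) + t • v := by rw [hx]; abel
    have e2 : x - p i = (c - p i) + t • v := by rw [hx]; abel
    have hnj : ‖x - p j‖^2 = ‖c - p j‖^2 + 2 * (t * inner ℝ (c - p j) v) + t^2 * ‖v‖^2 := by
      rw [e1, @norm_add_sq_real, real_inner_smul_right, norm_smul, Real.norm_eq_abs,
        abs_of_pos htpos, mul_pow]
    have hni : ‖x - p i‖^2 = ‖c - p i‖^2 + 2 * (t * inner ℝ (c - p i) v) + t^2 * ‖v‖^2 := by
      rw [e2, @norm_add_sq_real, real_inner_smul_right, norm_smul, Real.norm_eq_abs,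
        abs_of_pos htpos, mul_pow]
    have hdiff : (inner ℝ (c - p i) v : ℝ) - inner ℝ (c - p j) v = ‖v‖^2 := by
      rw [← inner_sub_left]
      have e3 : c - p i - (c - p j) = v := by rw [hv]; abel
      rw [e3, real_inner_self_eq_norm_sq]
    have hsq : ‖x - p j‖^2 < ‖x - p i‖^2 := by
      have heqn : ‖c - p i‖ = ‖c - p j‖ := by
        rw [← dist_eq_norm, ← dist_eq_norm]; exact heq
      have heqn2 : ‖c - p i‖^2 = ‖c - p j‖^2 := by rw [heqn]
      have h4 : t * (inner ℝ (c - p i) v : ℝ) - t * inner ℝ (c - p j) v = t * ‖v‖^2 := by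
        rw [← mul_sub, hdiff]
      have h5 : (0:ℝ) < t * ‖v‖^2 := by positivity
      linarith
    have := lt_of_pow_lt_pow_left₀ 2 (norm_nonneg (x - p i)) hsq
    rwa [dist_eq_norm, dist_eq_norm]
  -- x stays in the old cell
  have hxmem : x ∈ cell (p i) (pref p (j : ℕ)) := by
    intro s hs
    obtain ⟨k, hk, rfl⟩ := hs
    by_cases hki : k = i
    · subst hki; exact le_refl _
    · have hkS : k ∈ S := Finset.mem_filter.mpr ⟨Finset.mem_univ _, hk, hki⟩
      have h1 : dist x (p i) ≤ dist c (p i) + t * ‖v‖ := by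
        calc dist x (p i) ≤ dist x c + dist c (p i) := dist_triangle _ _ _
        _ = dist c (p i) + t * ‖v‖ := by rw [hxc]; ring
      have h2 : dist c (p k) - t * ‖v‖ ≤ dist x (p k) := by
        have := dist_triangle c x (p k)
        rw [dist_comm c x, hxc] at this
        linarith
      have h3 : ε ≤ f k := hεk k hkS
      rw [hf] at h3
      simp only [f] at h3
      linarith [h2t]
  -- x leaves the new cell
  have hxnot : x ∉ cell (p i) (pref p ((j : ℕ) + 1)) := by
    intro h
    have := h (p j) ⟨j, Nat.lt_succ_self _, rfl⟩
    exact absurd this (not_le.mpr hkey)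
  exact ⟨hsub, fun h => hxnot (h hxmem)⟩
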